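/- Suppose β·c < ν. Let (u,v,w) : [0,∞) → ℝ³ be a continuously differentiable solution of the tritrophic ODE system with u(t) ≥ 0, v(t) ≥ 0, w(t) ≥ 0 for all t ≥ 0. Then w(t) ≤ w(0)·exp(−(ν − β·c)·t) for all t ≥ 0; in particular w(t) → 0 as t → ∞ (the top predator vanishes). -/

import Mathlib

/-- If `βc < ν`, the top predator vanishes: for any continuously differentiable
nonnegative solution of the tritrophic system on `[0,∞)`,
`w(t) ≤ w(0)·exp(-(ν - βc)t)` for all `t ≥ 0`, and `w(t) → 0` as `t → ∞`. -/
theorem top_predator_vanishes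
    (α K a b c d γ μ ν β : ℝ)
    (hα : 0 < α) (hK : 0 < K) (ha : 0 < a) (hb : 0 < b) (hc : 0 < c)
    (hd : 0 < d) (hγ : 0 < γ) (hμ : 0 < μ) (hν : 0 < ν) (hβ : 0 < β)
    (hβcν : β * c < ν)
    (u v w : ℝ → ℝ)
    (hu : ∀ t : ℝ, 0 ≤ t →
      HasDerivAt u (α * u t * (1 - u t / K) - b * u t * v t / (u t + a)) t)
    (hv : ∀ t : ℝ, 0 ≤ t →
      HasDerivAt v (γ * (b * u t * v t / (u t + a)) - c * v t * w t / (v t + d) - μ * v t) t)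
    (hw : ∀ t : ℝ, 0 ≤ t →
      HasDerivAt w (β * (c * v t * w t / (v t + d)) - ν * w t) t)
    (hunn : ∀ t : ℝ, 0 ≤ t → 0 ≤ u t)
    (hvnn : ∀ t : ℝ, 0 ≤ t → 0 ≤ v t)
    (hwnn : ∀ t : ℝ, 0 ≤ t → 0 ≤ w t) :
    (∀ t : ℝ, 0 ≤ t → w t ≤ w 0 * Real.exp (-(ν - β * c) * t)) ∧
    Filter.Tendsto w Filter.atTop (nhds 0) := by
  set k : ℝ := ν - β * c with hk
  have hkpos : 0 < k := by simp [hk]; linarith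
  set g : ℝ → ℝ := fun t => w t * Real.exp (k * t) with hg
  -- derivative of g
  have hg' : ∀ t : ℝ, 0 ≤ t → HasDerivAt g
      ((β * (c * v t * w t / (v t + d)) - ν * w t) * Real.exp (k * t)
        + w t * (k * Real.exp (k * t))) t := by
    intro t ht
    exact (hw t ht).mul ((Real.hasDerivAt_exp (k * t)).comp t
      ((hasDerivAt_id t).const_mul k) |>.congr_deriv (by ring))
  have hg'nonpos : ∀ t : ℝ, 0 ≤ t →
      (β * (c * v t * w t / (v t + d)) - ν * w t) * Real.exp (k * t)
        + w t * (k * Real.exp (k * t)) ≤ 0 := by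
    intro t ht
    have hvd : 0 < v t + d := by linarith [hvnn t ht]
    have hfrac : v t / (v t + d) ≤ 1 := by
      rw [div_le_one hvd]; linarith
    have hwt := hwnn t ht
    have hexp : 0 < Real.exp (k * t) := Real.exp_pos _
    have key : β * (c * v t * w t / (v t + d)) ≤ β * c * w t := by
      have : c * v t * w t / (v t + d) = c * w t * (v t / (v t + d)) := by
        field_simp
      rw [this]
      calc β * (c * w t * (v t / (v t + d))) ≤ β * (c * w t * 1) := by
            apply mul_le_mul_of_nonneg_left _ hβ.le
            exact mul_le_mul_of_nonneg_left hfrac (by positivity)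
        _ = β * c * w t := by ring
    have : (β * (c * v t * w t / (v t + d)) - ν * w t) + w t * k ≤ 0 := by
      have : w t * k = (ν - β * c) * w t := by rw [hk]; ring
      linarith
    nlinarith [this, hexp]
  -- g is antitone on [0, ∞): g t ≤ g 0
  have hmain : ∀ t : ℝ, 0 ≤ t → w t ≤ w 0 * Real.exp (-(ν - β * c) * t) := by
    intro t ht
    have hanti : AntitoneOn g (Set.Icc 0 t) := by
      apply antitoneOn_of_deriv_nonpos (convex_Icc 0 t)
      · exact fun s hs => ((hg' s hs.1).continuousAt).continuousWithinAt
      · intro s hs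
        rw [interior_Icc] at hs
        exact (hg' s hs.1.le).differentiableAt.differentiableWithinAt
      · intro s hs
        rw [interior_Icc] at hs
        rw [(hg' s hs.1.le).deriv]
        exact hg'nonpos s hs.1.le
    have hle : g t ≤ g 0 := hanti (Set.left_mem_Icc.mpr ht) (Set.right_mem_Icc.mpr ht) ht
    have hg0 : g 0 = w 0 := by simp [hg]
    calc w t = w t * Real.exp (k * t) * Real.exp (-(k * t)) := by
          rw [mul_assoc, ← Real.exp_add]; simp
      _ ≤ w 0 * Real.exp (-(k * t)) := by
          apply mul_le_mul_of_nonneg_right _ (Real.exp_pos _).le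
          rw [← hg0]; exact hle
      _ = w 0 * Real.exp (-(ν - β * c) * t) := by rw [hk]; ring_nf
  refine ⟨hmain, ?_⟩
  have hexp0 : Filter.Tendsto (fun t : ℝ => Real.exp (-(ν - β * c) * t))
      Filter.atTop (nhds 0) := by
    have h1 : Filter.Tendsto (fun t : ℝ => (ν - β * c) * t) Filter.atTop Filter.atTop :=
      Filter.Tendsto.const_mul_atTop hkpos Filter.tendsto_id
    have h2 := Real.tendsto_exp_atBot.comp (Filter.tendsto_neg_atTop_atBot.comp h1)
    simpa only [Function.comp_def, neg_mul] using h2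
  have h0 : Filter.Tendsto (fun t : ℝ => w 0 * Real.exp (-(ν - β * c) * t))
      Filter.atTop (nhds 0) := by
    simpa using hexp0.const_mul (w 0)
  apply tendsto_of_tendsto_of_tendsto_of_le_of_le' tendsto_const_nhds h0
  · filter_upwards [Filter.eventually_ge_atTop (0:ℝ)] with t ht using hwnn t ht
  · filter_upwards [Filter.eventually_ge_atTop (0:ℝ)] with t ht using hmain t ht
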